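/- The formula t • A := Ad_{U⁻¹ t U}(A), for t ∈ T(k) and A a Hermitian n×n matrix with A^{(k)} having distinct eigenvalues, defines a group action of T(k) on such matrices: (t₁ t₂) • A = t₁ • (t₂ • A) and 1 • A = A. Moreover this action preserves the eigenvalues of every principal submatrix A^{(j)} for all j ≥ k. -/
import Mathlib


open Matrix

/-- The `j`-th principal (upper-left `j × j`) submatrix of an `n × n` matrix. -/
def principalSubmatrix {n : ℕ} (j : ℕ) (hj : j ≤ n) (A : Matrix (Fin n) (Fin n) ℂ) :
    Matrix (Fin j) (Fin j) ℂ :=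
  A.submatrix (Fin.castLE hj) (Fin.castLE hj)

/-- The embedding of a `k × k` matrix into `n × n` matrices as the upper-left block,
extended by the identity (the embedding `U(k) ⊂ U(n)`). -/
def embedBlock {n : ℕ} (k : ℕ) (hk : k ≤ n) (M : Matrix (Fin k) (Fin k) ℂ) :
    Matrix (Fin n) (Fin n) ℂ := fun i j =>
  if hi : (i : ℕ) < k then
    if hj : (j : ℕ) < k then M ⟨i, hi⟩ ⟨j, hj⟩ else 0
  else if i = j then 1 else 0

/-- The Gelfand-Zeitlin action `t • A = Ad_{U⁻¹ t U}(A)` of a diagonal torus element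
(given by its diagonal entries `s`) on Hermitian `n × n` matrices, where `U ∈ U(k)`
diagonalizes `A^{(k)}`. -/
noncomputable def gzAct {n : ℕ} (k : ℕ) (hk : k ≤ n) (U : Matrix (Fin k) (Fin k) ℂ) (s : Fin k → ℂ)
    (A : Matrix (Fin n) (Fin n) ℂ) : Matrix (Fin n) (Fin n) ℂ :=
  embedBlock k hk (Uᴴ * Matrix.diagonal s * U) * A *
    (embedBlock k hk (Uᴴ * Matrix.diagonal s * U))ᴴ

def gzEquiv {n k : ℕ} (hk : k ≤ n) : Fin k ⊕ Fin (n - k) ≃ Fin n :=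
  finSumFinEquiv.trans (finCongr (Nat.add_sub_cancel' hk))

lemma embedBlock_eq {n k : ℕ} (hk : k ≤ n) (M : Matrix (Fin k) (Fin k) ℂ) :
    embedBlock k hk M =
      (Matrix.fromBlocks M 0 0 (1 : Matrix (Fin (n - k)) (Fin (n - k)) ℂ)).submatrix
        (gzEquiv hk).symm (gzEquiv hk).symm := by
  ext i j
  obtain ⟨a, rfl⟩ : ∃ a, gzEquiv hk a = i := ⟨(gzEquiv hk).symm i, (gzEquiv hk).apply_symm_apply i⟩
  obtain ⟨b, rfl⟩ : ∃ b, gzEquiv hk b = j := ⟨(gzEquiv hk).symm j, (gzEquiv hk).apply_symm_apply j⟩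
  simp only [submatrix_apply, Equiv.symm_apply_apply]
  have hval : ∀ x : Fin k ⊕ Fin (n - k), ((gzEquiv hk x : Fin n) : ℕ) =
      Sum.elim (fun a : Fin k => (a : ℕ)) (fun b : Fin (n - k) => k + (b : ℕ)) x := by
    rintro (x | x) <;> simp [gzEquiv]
  rcases a with a | a <;> rcases b with b | b <;>
    simp only [embedBlock, fromBlocks, Sum.elim_inl, Sum.elim_inr, hval, of_apply]
  · rw [dif_pos a.isLt, dif_pos b.isLt]
  · rw [dif_pos a.isLt, dif_neg (by omega)]
    simp
  · rw [dif_neg (by omega)]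
    rw [if_neg]
    · simp
    · intro h
      have := congrArg Fin.val h
      rw [hval, hval] at this
      simp at this
      omega
  · rw [dif_neg (by omega)]
    simp only [Matrix.one_apply]
    by_cases hab : a = b
    · subst hab
      simp
    · rw [if_neg, if_neg (by simpa using hab)]
      intro h
      have := congrArg Fin.val h
      rw [hval, hval] at this
      simp only [Sum.elim_inr] at this
      exact hab (Fin.ext (by omega))

lemma embedBlock_mul {n k : ℕ} (hk : k ≤ n) (M N : Matrix (Fin k) (Fin k) ℂ) :
    embedBlock k hk (M * N) = embedBlock k hk M * embedBlock k hk N := by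
  rw [embedBlock_eq, embedBlock_eq, embedBlock_eq,
    Matrix.submatrix_mul_equiv _ _ _ (gzEquiv hk).symm, Matrix.fromBlocks_multiply]
  simp

lemma embedBlock_one {n k : ℕ} (hk : k ≤ n) :
    embedBlock k hk (1 : Matrix (Fin k) (Fin k) ℂ) = 1 := by
  rw [embedBlock_eq, Matrix.fromBlocks_one]
  exact Matrix.submatrix_one_equiv (gzEquiv hk).symm

lemma embedBlock_conjTranspose {n k : ℕ} (hk : k ≤ n) (M : Matrix (Fin k) (Fin k) ℂ) :
    (embedBlock k hk M)ᴴ = embedBlock k hk Mᴴ := by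
  rw [embedBlock_eq, embedBlock_eq, Matrix.conjTranspose_submatrix,
    Matrix.fromBlocks_conjTranspose]
  simp

lemma embedBlock_castLE {n k j : ℕ} (hkj : k ≤ j) (hj : j ≤ n)
    (M : Matrix (Fin k) (Fin k) ℂ) (p q : Fin j) :
    embedBlock k (hkj.trans hj) M (Fin.castLE hj p) (Fin.castLE hj q) =
      embedBlock k hkj M p q := by
  simp [embedBlock, Fin.ext_iff]

lemma principal_mul_left {n k j : ℕ} (hkj : k ≤ j) (hj : j ≤ n)
    (M : Matrix (Fin k) (Fin k) ℂ) (B : Matrix (Fin n) (Fin n) ℂ) :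
    principalSubmatrix j hj (embedBlock k (hkj.trans hj) M * B) =
      embedBlock k hkj M * principalSubmatrix j hj B := by
  ext p q
  simp only [principalSubmatrix, submatrix_apply, mul_apply]
  calc ∑ a : Fin n, embedBlock k (hkj.trans hj) M (Fin.castLE hj p) a * B a (Fin.castLE hj q)
      = ∑ a ∈ Finset.univ.map (Fin.castLEEmb hj),
          embedBlock k (hkj.trans hj) M (Fin.castLE hj p) a * B a (Fin.castLE hj q) := by
        symm
        apply Finset.sum_subset (Finset.subset_univ _)
        intro a _ ha
        have haj : ¬ (a : ℕ) < j := by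
          intro h
          exact ha (Finset.mem_map.2 ⟨⟨a, h⟩, Finset.mem_univ _, rfl⟩)
        have hak : ¬ (a : ℕ) < k := fun h => haj (h.trans_le hkj)
        have hpa : Fin.castLE hj p ≠ a := by
          intro h
          apply haj
          rw [← h]
          exact p.isLt
        by_cases hp : (p : ℕ) < k <;> simp [embedBlock, hp, hak, hpa]
    _ = ∑ x : Fin j,
          embedBlock k (hkj.trans hj) M (Fin.castLE hj p) (Fin.castLE hj x) *
            B (Fin.castLE hj x) (Fin.castLE hj q) := Finset.sum_map _ _ _
    _ = ∑ x : Fin j, embedBlock k hkj M p x * B (Fin.castLE hj x) (Fin.castLE hj q) := by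
        refine Finset.sum_congr rfl fun x _ => ?_
        rw [embedBlock_castLE]

lemma principal_mul_right {n k j : ℕ} (hkj : k ≤ j) (hj : j ≤ n)
    (M : Matrix (Fin k) (Fin k) ℂ) (B : Matrix (Fin n) (Fin n) ℂ) :
    principalSubmatrix j hj (B * embedBlock k (hkj.trans hj) M) =
      principalSubmatrix j hj B * embedBlock k hkj M := by
  ext p q
  simp only [principalSubmatrix, submatrix_apply, mul_apply]
  calc ∑ a : Fin n, B (Fin.castLE hj p) a * embedBlock k (hkj.trans hj) M a (Fin.castLE hj q)
      = ∑ a ∈ Finset.univ.map (Fin.castLEEmb hj),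
          B (Fin.castLE hj p) a * embedBlock k (hkj.trans hj) M a (Fin.castLE hj q) := by
        symm
        apply Finset.sum_subset (Finset.subset_univ _)
        intro a _ ha
        have haj : ¬ (a : ℕ) < j := by
          intro h
          exact ha (Finset.mem_map.2 ⟨⟨a, h⟩, Finset.mem_univ _, rfl⟩)
        have hak : ¬ (a : ℕ) < k := fun h => haj (h.trans_le hkj)
        have hqa : a ≠ Fin.castLE hj q := by
          intro h
          apply haj
          rw [h]
          exact q.isLt
        simp [embedBlock, hak, hqa]
    _ = ∑ x : Fin j,
          B (Fin.castLE hj p) (Fin.castLE hj x) *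
            embedBlock k (hkj.trans hj) M (Fin.castLE hj x) (Fin.castLE hj q) :=
        Finset.sum_map _ _ _
    _ = ∑ x : Fin j, B (Fin.castLE hj p) (Fin.castLE hj x) * embedBlock k hkj M x q := by
        refine Finset.sum_congr rfl fun x _ => ?_
        rw [embedBlock_castLE]

open Polynomial in
lemma charpoly_conj_unit {j : ℕ} (W B : Matrix (Fin j) (Fin j) ℂ) (h2 : W * Wᴴ = 1) :
    (W * B * Wᴴ).charpoly = B.charpoly := by
  have hc : ∀ P : Matrix (Fin j) (Fin j) (Polynomial ℂ),
      Matrix.scalar (Fin j) (X : Polynomial ℂ) * P = P * Matrix.scalar (Fin j) X :=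
    fun P => (Matrix.scalar_commute _ (fun r => Commute.all _ r) P).eq
  have key : charmatrix (W * B * Wᴴ) =
      W.map C * charmatrix B * Wᴴ.map C := by
    rw [charmatrix, charmatrix, RingHom.mapMatrix_apply, RingHom.mapMatrix_apply,
      mul_sub, sub_mul]
    congr 1
    · rw [← hc, mul_assoc, ← Matrix.map_mul, h2]
      simp
    · rw [← Matrix.map_mul, ← Matrix.map_mul]
  rw [Matrix.charpoly, Matrix.charpoly, key, det_mul, det_mul]
  rw [mul_comm, ← mul_assoc, ← det_mul, ← Matrix.map_mul, mul_eq_one_comm.mp h2]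
  simp

/-- The formula `t • A := Ad_{U⁻¹ t U}(A)` defines a group action of the diagonal torus
`T(k)`: it is multiplicative and unital; moreover it preserves the eigenvalues
(characteristic polynomials) of every principal submatrix `A^{(j)}` for `j ≥ k`. -/
theorem gz_torus_action (n k : ℕ) (hk : k ≤ n)
    (A : Matrix (Fin n) (Fin n) ℂ) (hA : A.IsHermitian)
    (d : Fin k → ℝ) (hd : StrictMono d)
    (U : Matrix (Fin k) (Fin k) ℂ) (hU : U ∈ Matrix.unitaryGroup (Fin k) ℂ)
    (hdiag : U * principalSubmatrix k hk A * Uᴴ = Matrix.diagonal fun i => (d i : ℂ))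
    (s₁ s₂ : Fin k → ℂ) (hs₁ : ∀ i, star (s₁ i) * s₁ i = 1)
    (hs₂ : ∀ i, star (s₂ i) * s₂ i = 1) :
    gzAct k hk U (fun i => s₁ i * s₂ i) A = gzAct k hk U s₁ (gzAct k hk U s₂ A) ∧
      gzAct k hk U (fun _ => 1) A = A ∧
      ∀ (j : ℕ) (hkj : k ≤ j) (hj : j ≤ n),
        (principalSubmatrix j hj (gzAct k hk U s₁ A)).charpoly =
          (principalSubmatrix j hj A).charpoly := by
  obtain ⟨h1, h2⟩ := hU
  rw [Matrix.star_eq_conjTranspose] at h1 h2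
  refine ⟨?_, ?_, ?_⟩
  · have hm : Uᴴ * Matrix.diagonal (fun i => s₁ i * s₂ i) * U =
        (Uᴴ * Matrix.diagonal s₁ * U) * (Uᴴ * Matrix.diagonal s₂ * U) := by
      rw [show Matrix.diagonal (fun i => s₁ i * s₂ i) = Matrix.diagonal s₁ * Matrix.diagonal s₂
        from (Matrix.diagonal_mul_diagonal _ _).symm]
      simp only [Matrix.mul_assoc]
      rw [← Matrix.mul_assoc U Uᴴ, h2, one_mul]
    unfold gzAct
    rw [hm, embedBlock_mul, conjTranspose_mul]
    simp only [Matrix.mul_assoc]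
  · have hone : Uᴴ * Matrix.diagonal (fun _ : Fin k => (1 : ℂ)) * U = 1 := by
      rw [Matrix.diagonal_one, Matrix.mul_one, h1]
    unfold gzAct
    rw [hone, embedBlock_one]
    simp
  · intro j hkj hj
    have hDD : Matrix.diagonal s₁ * (Matrix.diagonal s₁)ᴴ = 1 := by
      rw [Matrix.diagonal_conjTranspose, Matrix.diagonal_mul_diagonal]
      have : (fun i => s₁ i * star s₁ i) = fun _ => (1 : ℂ) := funext fun i => by
        show s₁ i * star (s₁ i) = 1
        rw [mul_comm]
        exact hs₁ i
      rw [this, Matrix.diagonal_one]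
    have hPPH : (Uᴴ * Matrix.diagonal s₁ * U) * (Uᴴ * Matrix.diagonal s₁ * U)ᴴ = 1 := by
      simp only [conjTranspose_mul, conjTranspose_conjTranspose, Matrix.mul_assoc]
      rw [← Matrix.mul_assoc U Uᴴ, h2, one_mul,
        ← Matrix.mul_assoc (Matrix.diagonal s₁) (Matrix.diagonal s₁)ᴴ U, hDD, one_mul, h1]
    have hW : embedBlock k hkj (Uᴴ * Matrix.diagonal s₁ * U) *
        (embedBlock k hkj (Uᴴ * Matrix.diagonal s₁ * U))ᴴ = 1 := by
      rw [embedBlock_conjTranspose, ← embedBlock_mul, hPPH, embedBlock_one]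
    have hrw : principalSubmatrix j hj (gzAct k hk U s₁ A) =
        embedBlock k hkj (Uᴴ * Matrix.diagonal s₁ * U) * principalSubmatrix j hj A *
          (embedBlock k hkj (Uᴴ * Matrix.diagonal s₁ * U))ᴴ := by
      unfold gzAct
      rw [embedBlock_conjTranspose, principal_mul_right hkj hj, principal_mul_left hkj hj,
        embedBlock_conjTranspose]
    rw [hrw, charpoly_conj_unit _ _ hW]
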